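/- Let k be a field of characteristic different from 2 and φ a Pfister form (or more generally an anisotropic quadratic form) over k. If φ becomes hyperbolic (isotropic) over a finite extension L of k of odd degree, then φ is hyperbolic (respectively isotropic) over k. -/

import Mathlib

open scoped TensorProduct
open Module

/-- A quadratic form is hyperbolic if it admits a totally isotropic subspace of half the
dimension (a Lagrangian); for nondegenerate forms in characteristic ≠ 2 this is the usual
notion of hyperbolicity. -/
def QuadraticForm.IsHyperbolic {k V : Type*} [Field k] [AddCommGroup V] [Module k V]
    (Q : QuadraticForm k V) : Prop :=
  ∃ N : Submodule k V, (∀ v ∈ N, Q v = 0) ∧ 2 * Module.finrank k N = Module.finrank k V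

namespace SpringerAux

open Polynomial

variable {k : Type*} [Field k] {ι : Type*} [Fintype ι]

/-- `HasZ M L f` says the quadratic form with Gram matrix `M` has a nontrivial zero with
coordinates in `L`, transported along the ring hom `f`. -/
def HasZ (M : ι → ι → k) (L : Type*) [CommRing L] (f : k →+* L) : Prop :=
  ∃ c : ι → L, c ≠ 0 ∧ ∑ i, ∑ j, c i * c j * f (M i j) = 0

lemma coeff_mul_of_le {R : Type*} [CommRing R] {m : ℕ} {f g : R[X]}
    (hf : f.natDegree ≤ m) (hg : g.natDegree ≤ m) :
    (f * g).coeff (m + m) = f.coeff m * g.coeff m := by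
  rw [coeff_mul]
  apply Finset.sum_eq_single (m, m)
  · rintro ⟨a, b⟩ hab hne
    rw [Finset.HasAntidiagonal.mem_antidiagonal] at hab
    rcases lt_or_ge m a with h | h
    · rw [coeff_eq_zero_of_natDegree_lt (lt_of_le_of_lt hf h), zero_mul]
    · have hb : m < b := by
        have hne' : a ≠ m ∨ b ≠ m := by
          by_contra hc
          push_neg at hc
          exact hne (by rw [hc.1, hc.2])
        omega
      rw [coeff_eq_zero_of_natDegree_lt (lt_of_le_of_lt hg hb), mul_zero]
  · intro h
    simp at h

lemma exists_odd_factor :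
    ∀ d (h : k[X]), h.natDegree = d → h ≠ 0 → Odd h.natDegree →
      ∃ q : k[X], q.Monic ∧ Irreducible q ∧ q ∣ h ∧ Odd q.natDegree := by
  intro d
  induction d using Nat.strong_induction_on with
  | _ d IH =>
    intro h hd h0 hodd
    have hu : ¬IsUnit h := by
      intro hu
      rw [Polynomial.natDegree_eq_zero_of_isUnit hu] at hodd
      simp [Nat.odd_iff] at hodd
    obtain ⟨q, hqm, hqi, hqd⟩ := h.exists_monic_irreducible_factor hu
    by_cases hq : Odd q.natDegree
    · exact ⟨q, hqm, hqi, hqd, hq⟩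
    · obtain ⟨h', rfl⟩ := hqd
      have hq0 : q ≠ 0 := hqi.ne_zero
      have hh'0 : h' ≠ 0 := by rintro rfl; simp at h0
      have hdeg : (q * h').natDegree = q.natDegree + h'.natDegree := natDegree_mul hq0 hh'0
      have hqpos : 0 < q.natDegree := hqi.natDegree_pos
      have hodd' : Odd h'.natDegree := by
        rw [Nat.odd_iff] at hodd ⊢
        rw [Nat.not_odd_iff_even, Nat.even_iff] at hq
        omega
      obtain ⟨r, h1, h2, h3, h4⟩ := IH h'.natDegree (by omega) h' rfl hh'0 hodd'
      exact ⟨r, h1, h2, h3.mul_left q, h4⟩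

lemma springer_core (M : ι → ι → k) (hk : ¬ HasZ M k (RingHom.id k)) :
    ∀ d (p : k[X]), p.natDegree = d → p.Monic → Irreducible p → Odd p.natDegree →
      ¬ HasZ M (AdjoinRoot p) (algebraMap k (AdjoinRoot p)) := by
  classical
  intro d
  induction d using Nat.strong_induction_on with
  | _ d IH =>
  rintro p hpd hpm hpi hpodd ⟨c, hc0, hcs⟩
  have hmkC : ∀ x : k, AdjoinRoot.mk p (C x) = algebraMap k (AdjoinRoot p) x := fun x => rfl
  -- lift the coordinates to polynomials of degree < deg p
  have hlift : ∀ i, ∃ F : k[X], AdjoinRoot.mk p F = c i ∧ F.degree < p.degree := by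
    intro i
    obtain ⟨G, hG⟩ := AdjoinRoot.mk_surjective (c i)
    refine ⟨G %ₘ p, ?_, degree_modByMonic_lt G hpm⟩
    rw [modByMonic_eq_sub_mul_div G p, map_sub, map_mul, AdjoinRoot.mk_self, zero_mul,
      sub_zero, hG]
  choose F hF hFdeg using hlift
  obtain ⟨i₀, hi₀⟩ : ∃ i, c i ≠ 0 := Function.ne_iff.mp hc0
  have hFi₀ : F i₀ ≠ 0 := fun h => hi₀ (by rw [← hF i₀, h, map_zero])
  have hne : (Finset.univ : Finset ι).Nonempty := ⟨i₀, Finset.mem_univ _⟩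
  obtain ⟨G, hFG, hGgcd⟩ := Finset.extract_gcd F hne
  set D := Finset.univ.gcd F with hD
  have hD0 : D ≠ 0 := by
    intro h
    exact hFi₀ (by rw [hFG i₀ (Finset.mem_univ _), h, zero_mul])
  have hGi₀ : G i₀ ≠ 0 := by
    intro h
    exact hFi₀ (by rw [hFG i₀ (Finset.mem_univ _), h, mul_zero])
  set m := Finset.univ.sup fun i => (G i).natDegree with hm
  have hGm : ∀ i, (G i).natDegree ≤ m := fun i => by
    rw [hm]; exact Finset.le_sup (f := fun i => (G i).natDegree) (Finset.mem_univ i)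
  have hp0 : p ≠ 0 := hpi.ne_zero
  have hppos : 0 < p.natDegree := hpi.natDegree_pos
  -- m < deg p
  have hmlt : m < p.natDegree := by
    obtain ⟨i₁, -, hi₁⟩ := Finset.exists_mem_eq_sup Finset.univ hne fun i => (G i).natDegree
    by_cases hGz : G i₁ = 0
    · rw [← hm] at hi₁
      rw [hi₁, hGz, natDegree_zero] at *
      omega
    · have hFi₁ : F i₁ ≠ 0 := by
        rw [hFG i₁ (Finset.mem_univ _)]
        exact mul_ne_zero hD0 hGz
      have h1 : (F i₁).natDegree < p.natDegree :=
        natDegree_lt_natDegree hFi₁ (hFdeg i₁)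
      have h2 : (F i₁).natDegree = D.natDegree + (G i₁).natDegree := by
        rw [hFG i₁ (Finset.mem_univ _), natDegree_mul hD0 hGz]
      rw [← hm] at hi₁
      omega
  -- find an index attaining the sup with nonzero polynomial
  have hattain : ∃ i₁, G i₁ ≠ 0 ∧ (G i₁).natDegree = m := by
    by_cases hm0 : m = 0
    · exact ⟨i₀, hGi₀, le_antisymm (hGm i₀) (hm0 ▸ Nat.zero_le _)⟩
    · obtain ⟨i₁, -, hi₁⟩ := Finset.exists_mem_eq_sup Finset.univ hne fun i => (G i).natDegree
      rw [← hm] at hi₁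
      refine ⟨i₁, ?_, hi₁.symm⟩
      intro h
      rw [h, natDegree_zero] at hi₁
      omega
  obtain ⟨i₁, hGi₁, hdegi₁⟩ := hattain
  set w : ι → k := fun i => (G i).coeff m with hwdef
  have hw0 : w ≠ 0 := by
    intro h
    have := congrFun h i₁
    rw [hwdef] at this
    simp only [← hdegi₁] at this
    exact leadingCoeff_ne_zero.mpr hGi₁ this
  set T : k[X] := ∑ i, ∑ j, G i * G j * C (M i j) with hT
  -- the coefficient of T in degree 2m is the value of the form at w
  have hTcoeff : T.coeff (m + m) = ∑ i, ∑ j, w i * w j * M i j := by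
    rw [hT, finset_sum_coeff]
    refine Finset.sum_congr rfl fun i _ => ?_
    rw [finset_sum_coeff]
    refine Finset.sum_congr rfl fun j _ => ?_
    rw [coeff_mul_C, coeff_mul_of_le (hGm i) (hGm j)]
  have hT2m : T.coeff (m + m) ≠ 0 := by
    rw [hTcoeff]
    intro h
    exact hk ⟨w, hw0, by simpa using h⟩
  have hTne : T ≠ 0 := fun h => hT2m (by simp [h])
  have hTdegle : T.natDegree ≤ m + m := by
    refine natDegree_sum_le_of_forall_le _ _ fun i _ => ?_
    refine natDegree_sum_le_of_forall_le _ _ fun j _ => ?_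
    refine natDegree_mul_le.trans ?_
    have h1 : (G i * G j).natDegree ≤ m + m :=
      natDegree_mul_le.trans (add_le_add (hGm i) (hGm j))
    simpa [natDegree_C] using h1
  have hTdeg : T.natDegree = m + m :=
    le_antisymm hTdegle (le_natDegree_of_ne_zero hT2m)
  -- p divides T
  have hmkT : AdjoinRoot.mk p (∑ i, ∑ j, F i * F j * C (M i j)) = 0 := by
    rw [map_sum]
    rw [show (0 : AdjoinRoot p) = ∑ i : ι, ∑ j : ι, c i * c j * algebraMap k _ (M i j) from
      hcs.symm]
    refine Finset.sum_congr rfl fun i _ => ?_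
    rw [map_sum]
    refine Finset.sum_congr rfl fun j _ => ?_
    rw [map_mul, map_mul, hF, hF, hmkC]
  have hpS : p ∣ ∑ i, ∑ j, F i * F j * C (M i j) := AdjoinRoot.mk_eq_zero.mp hmkT
  have hSDT : (∑ i, ∑ j, F i * F j * C (M i j)) = D * D * T := by
    rw [hT, Finset.mul_sum]
    refine Finset.sum_congr rfl fun i _ => ?_
    rw [Finset.mul_sum]
    refine Finset.sum_congr rfl fun j _ => ?_
    rw [hFG i (Finset.mem_univ _), hFG j (Finset.mem_univ _)]
    ring
  have hpp : Prime p := hpi.prime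
  have hpD : ¬ p ∣ D := by
    intro hdvd
    have h1 : D.degree ≤ (F i₀).degree :=
      degree_le_of_dvd ⟨G i₀, hFG i₀ (Finset.mem_univ _)⟩ hFi₀
    have h2 : p.degree ≤ D.degree := degree_le_of_dvd hdvd hD0
    exact absurd ((h2.trans h1).trans_lt (hFdeg i₀)) (lt_irrefl _)
  have hpT : p ∣ T := by
    rw [hSDT] at hpS
    rcases hpp.dvd_mul.mp hpS with h | h
    · rcases hpp.dvd_mul.mp h with h' | h' <;> exact absurd h' hpD
    · exact h
  obtain ⟨h, hTh⟩ := hpT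
  have hh0 : h ≠ 0 := by rintro rfl; rw [mul_zero] at hTh; exact hTne hTh
  have hdegTh : T.natDegree = p.natDegree + h.natDegree := hTh ▸ natDegree_mul hp0 hh0
  have hhodd : Odd h.natDegree := by
    rw [Nat.odd_iff] at hpodd ⊢
    omega
  have hhlt : h.natDegree < p.natDegree := by omega
  obtain ⟨q, hqm, hqi, hqdvd, hqodd⟩ := exists_odd_factor h.natDegree h rfl hh0 hhodd
  have hqT : q ∣ T := hTh ▸ (hqdvd.mul_left p)
  have hqlt : q.natDegree < d := by
    have := natDegree_le_of_dvd hqdvd hh0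
    omega
  -- build a zero over AdjoinRoot q
  refine IH q.natDegree hqlt q rfl hqm hqi hqodd ⟨fun i => AdjoinRoot.mk q (G i), ?_, ?_⟩
  · intro h0
    have hdvd : ∀ i, q ∣ G i := fun i => AdjoinRoot.mk_eq_zero.mp (congrFun h0 i)
    have : q ∣ Finset.univ.gcd G := Finset.dvd_gcd fun i _ => hdvd i
    rw [hGgcd] at this
    exact hqi.not_isUnit (isUnit_of_dvd_one this)
  · have : AdjoinRoot.mk q T = 0 := AdjoinRoot.mk_eq_zero.mpr hqT
    rw [hT, map_sum] at this
    rw [← this]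
    refine Finset.sum_congr rfl fun i _ => ?_
    rw [map_sum]
    refine Finset.sum_congr rfl fun j _ => ?_
    rw [map_mul, map_mul]
    rfl


lemma hasZ_map {M : ι → ι → k} {A B : Type*} [CommRing A] [CommRing B]
    {f : k →+* A} {g : k →+* B} (e : A ≃+* B) (hfg : ∀ x, e (f x) = g x) :
    HasZ M A f → HasZ M B g := by
  rintro ⟨c, hc0, hcs⟩
  refine ⟨fun i => e (c i), ?_, ?_⟩
  · intro h0
    apply hc0
    funext i
    have := congrFun h0 i
    simpa using e.injective (by simpa using this)
  · have := congrArg e hcs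
    simpa [map_sum, map_mul, hfg] using this

universe v

lemma springer_field (L : Type v) [Field L] :
    ∀ n : ℕ, Odd n → ∀ (K : Type v) [Field K] [Algebra K L] [FiniteDimensional K L],
      finrank K L = n → ∀ (M : ι → ι → K), ¬ HasZ M K (RingHom.id K) →
      ¬ HasZ M L (algebraMap K L) := by
  intro n
  induction n using Nat.strong_induction_on with
  | _ n IH =>
  rintro hodd K _ _ _ hrank M hK ⟨c, hc0, hcs⟩
  by_cases hall : ∀ i, c i ∈ Set.range (algebraMap K L)
  · choose d hd using hall
    apply hK
    refine ⟨d, ?_, ?_⟩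
    · intro h0
      apply hc0
      funext i
      rw [Pi.zero_apply, ← hd i, show d i = 0 from congrFun h0 i, map_zero]
    · apply (algebraMap K L).injective
      rw [map_sum, map_zero]
      rw [← hcs]
      refine Finset.sum_congr rfl fun i _ => ?_
      rw [map_sum]
      refine Finset.sum_congr rfl fun j _ => ?_
      simp [map_mul, hd]
  · push_neg at hall
    obtain ⟨i₀, hi₀⟩ := hall
    set α := c i₀ with hα
    have hint : IsIntegral K α := IsIntegral.of_finite K α
    set p := minpoly K α with hp
    have hpm : p.Monic := minpoly.monic hint
    have hpi : Irreducible p := minpoly.irreducible hint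
    set K' := IntermediateField.adjoin K ({α} : Set L) with hK'def
    haveI instFD : FiniteDimensional K K' := FiniteDimensional.left K K' L
    haveI instFD2 : FiniteDimensional K' L := FiniteDimensional.right K K' L
    have hK'rank : finrank K K' = p.natDegree := IntermediateField.adjoin.finrank hint
    have hmul : finrank K K' * finrank K' L = n := by
      rw [Module.finrank_mul_finrank, hrank]
    have ha1 : finrank K K' ≠ 1 := by
      intro h1
      rw [IntermediateField.finrank_eq_one_iff] at h1
      apply hi₀
      have hmem : α ∈ K' := IntermediateField.mem_adjoin_simple_self K α
      rw [h1, IntermediateField.mem_bot] at hmem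
      exact hmem
    have hapos : 0 < finrank K K' := finrank_pos
    have hbpos : 0 < finrank K' L := finrank_pos
    have hoddfact := Nat.odd_mul.mp (hmul ▸ hodd)
    have hoddp : Odd p.natDegree := hK'rank ▸ hoddfact.1
    have hodd' : Odd (finrank K' L) := hoddfact.2
    have hlt : finrank K' L < n := by
      rw [← hmul]
      have h2 : 2 ≤ finrank K K' := by omega
      calc finrank K' L = 1 * finrank K' L := (one_mul _).symm
        _ < finrank K K' * finrank K' L := by
            exact (Nat.mul_lt_mul_right hbpos).mpr (by omega)
    have hK' : ¬ HasZ M K' (algebraMap K K') := by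
      intro hz
      refine springer_core M hK p.natDegree p rfl hpm hpi hoddp ?_
      exact hasZ_map (f := algebraMap K K')
        (IntermediateField.adjoinRootEquivAdjoin K hint).symm.toRingEquiv
        (fun x => (IntermediateField.adjoinRootEquivAdjoin K hint).symm.commutes x) hz
    refine IH (finrank K' L) hlt hodd' K' rfl (fun i j => algebraMap K K' (M i j)) ?_ ?_
    · intro hz
      apply hK'
      obtain ⟨c', h1, h2⟩ := hz
      exact ⟨c', h1, by simpa using h2⟩
    · refine ⟨c, hc0, ?_⟩
      rw [← hcs]
      refine Finset.sum_congr rfl fun i _ => Finset.sum_congr rfl fun j _ => ?_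
      rw [← IsScalarTower.algebraMap_apply]

end SpringerAux


open SpringerAux

/-- Springer's theorem: let `φ` be a Pfister form (the Pfister property,
"isotropic implies hyperbolic", is the hypothesis `hpfister`; for a general form the
isotropy statement is the first conclusion).  If `φ` becomes isotropic (equivalently,
hyperbolic) over a finite extension `L/k` of odd degree, then `φ` is isotropic over `k`,
and hence hyperbolic over `k`. -/
theorem isotropic_and_hyperbolic_of_odd_degree_isotropic
    (k : Type*) [Field k] [Invertible (2 : k)]
    (V : Type*) [AddCommGroup V] [Module k V] [FiniteDimensional k V]
    (φ : QuadraticForm k V)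
    (hpfister : ¬ φ.Anisotropic → φ.IsHyperbolic)
    (L : Type*) [Field L] [Algebra k L] [FiniteDimensional k L]
    (hodd : Odd (Module.finrank k L))
    (hL : ¬ (φ.baseChange L).Anisotropic) :
    ¬ φ.Anisotropic ∧ φ.IsHyperbolic := by
  classical
  letI : Invertible (2 : L) := (Invertible.map (algebraMap k L) 2).copy 2 (map_ofNat _ _).symm
  set n := finrank k V with hn
  set e : Basis (Fin n) k V := finBasis k V with he
  set B := QuadraticMap.associated (R := k) φ with hB
  set M : Fin n → Fin n → k := fun i j => B (e i) (e j) with hM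
  -- isotropic vector over L
  simp only [QuadraticMap.Anisotropic, not_forall] at hL
  obtain ⟨w, hw0, hwne⟩ := hL
  set c : Fin n → L := fun i => (Basis.baseChange L e).repr w i with hc
  have hw : w = ∑ i, c i ⊗ₜ[k] e i := by
    conv_lhs => rw [← (Basis.baseChange L e).sum_repr w]
    refine Finset.sum_congr rfl fun i _ => ?_
    rw [Basis.baseChange_apply, hc]
    rw [TensorProduct.smul_tmul', smul_eq_mul, mul_one]
  have hc0 : c ≠ 0 := by
    intro h
    apply hwne
    rw [hw, h]
    simp
  have key : (φ.baseChange L) (∑ i, c i ⊗ₜ[k] e i)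
      = ∑ i, ∑ j, c i * c j * algebraMap k L (M i j) := by
    rw [← QuadraticMap.associated_eq_self_apply L]
    rw [QuadraticForm.associated_baseChange]
    simp only [map_sum, LinearMap.sum_apply, LinearMap.BilinForm.baseChange_tmul,
      Algebra.smul_def, Finset.mul_sum]
    rw [Finset.sum_comm]
    refine Finset.sum_congr rfl fun i _ => Finset.sum_congr rfl fun j _ => ?_
    rw [hM]
    ring
  have hz : HasZ M L (algebraMap k L) := ⟨c, hc0, by rw [← key, ← hw, hw0]⟩
  have hiso : ¬ φ.Anisotropic := by
    intro han
    have hk0 : ¬ HasZ M k (RingHom.id k) := by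
      rintro ⟨c', hc'0, hc's⟩
      set v := ∑ i, c' i • e i with hv
      have hv0 : v ≠ 0 := by
        intro h
        apply hc'0
        have := congrArg (⇑e.repr) h
        rw [hv] at this
        rw [map_zero] at this
        funext i
        have h2 := congrFun (congrArg (⇑) this) i
        rwa [Basis.repr_sum_self] at h2
      apply hv0
      apply han v
      rw [hv, ← QuadraticMap.associated_eq_self_apply k φ]
      simp only [map_sum, map_smul, LinearMap.sum_apply, LinearMap.smul_apply, smul_eq_mul,
        Finset.mul_sum]
      rw [Finset.sum_comm, ← hc's]
      refine Finset.sum_congr rfl fun i _ => Finset.sum_congr rfl fun j _ => ?_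
      simp only [RingHom.id_apply, hM]
      ring
    haveI : FiniteDimensional (⊥ : IntermediateField k L) L := FiniteDimensional.right k _ L
    have hrank : finrank (⊥ : IntermediateField k L) L = finrank k L :=
      IntermediateField.finrank_bot'
    set Mb : Fin n → Fin n → (⊥ : IntermediateField k L) :=
      fun i j => algebraMap k _ (M i j) with hMb
    have hbot : ¬ HasZ Mb (⊥ : IntermediateField k L) (RingHom.id _) := by
      rintro ⟨c', hc'0, hc's⟩
      apply hk0
      refine ⟨fun i => IntermediateField.botEquiv k L (c' i), ?_, ?_⟩
      · intro h
        apply hc'0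
        funext i
        have := congrFun h i
        simpa using (IntermediateField.botEquiv k L).injective (by simpa using this)
      · have := congrArg (IntermediateField.botEquiv k L) hc's
        simpa [map_sum, map_mul, hMb, IntermediateField.botEquiv_def] using this
    have hfin := springer_field L (finrank k L) hodd (⊥ : IntermediateField k L) hrank Mb hbot
    apply hfin
    obtain ⟨cL, h1, h2⟩ := hz
    refine ⟨cL, h1, ?_⟩
    rw [← h2]
    refine Finset.sum_congr rfl fun i _ => Finset.sum_congr rfl fun j _ => ?_
    rw [hMb, ← IsScalarTower.algebraMap_apply]
  exact ⟨hiso, hpfister hiso⟩
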